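/- Let Σ be a finite nonempty alphabet and let A_D be the TBA over Σ with locations {A, B}, a single initial and accepting location A, a single clock z, and transitions: for every α ∈ Σ, (A, B, α, {z}, true), (B, B, α, ∅, z < 1), and (B, A, α, ∅, z ≥ 1). Then L(A_D) = T_DΣ^ω, i.e., the language of A_D is exactly the set of all time divergent infinite timed words over Σ. (Theorem 1.) -/

import Mathlib

open Filter

/-! ## Timed words -/

/-- An infinite timed word: a symbol sequence and a timestamp sequence (positions 0,1,2,…
correspond to the paper's positions 1,2,3,…; the convention τ₀ = 0 is used in definitions). -/
abbrev InfTW (α : Type) := (ℕ → α) × (ℕ → ℝ)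

/-- `ρ` is a genuine infinite timed word: timestamps are strictly increasing
non-negative reals (strictly above the conventional τ₀ = 0). -/
def IsInfTW {α : Type} (ρ : InfTW α) : Prop := 0 < ρ.2 0 ∧ StrictMono ρ.2

/-- Time divergent infinite timed words. -/
def IsDivergent {α : Type} (ρ : InfTW α) : Prop := IsInfTW ρ ∧ Tendsto ρ.2 atTop atTop

/-- A finite timed word with `len + 1` letters, at positions `0,…,len`. -/
structure FinTW (α : Type) where
  len : ℕ
  sym : ℕ → α
  time : ℕ → ℝ

/-- `ρ` is a genuine finite timed word: `0 < τ₁ < … < τ_n`. -/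
def IsFinTW {α : Type} (ρ : FinTW α) : Prop :=
  0 < ρ.time 0 ∧ ∀ i < ρ.len, ρ.time i < ρ.time (i + 1)

/-- Duration of a finite timed word. -/
def FinTW.dur {α : Type} (ρ : FinTW α) : ℝ := ρ.time ρ.len

/-- Concatenation of a finite timed word with an infinite timed word
(timestamps of the suffix are shifted by the duration). -/
def FinTW.catInf {α : Type} (ρ : FinTW α) (μ : InfTW α) : InfTW α :=
  (fun i => if i ≤ ρ.len then ρ.sym i else μ.1 (i - ρ.len - 1),
   fun i => if i ≤ ρ.len then ρ.time i else ρ.dur + μ.2 (i - ρ.len - 1))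

/-- Concatenation of two finite timed words. -/
def FinTW.catFin {α : Type} (ρ ρ' : FinTW α) : FinTW α where
  len := ρ.len + 1 + ρ'.len
  sym := fun i => if i ≤ ρ.len then ρ.sym i else ρ'.sym (i - ρ.len - 1)
  time := fun i => if i ≤ ρ.len then ρ.time i else ρ.dur + ρ'.time (i - ρ.len - 1)

/-! ## Timed Büchi automata -/

/-- Comparison operators for clock constraints. -/
inductive Cmp where
  | lt
  | le
  | eq
  | ge
  | gt

def Cmp.sat : Cmp → ℝ → ℕ → Prop
  | .lt, x, n => x < n
  | .le, x, n => x ≤ n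
  | .eq, x, n => x = n
  | .ge, x, n => (n : ℝ) ≤ x
  | .gt, x, n => (n : ℝ) < x

/-- Clock constraints: finite conjunctions of atoms `c ∼ n`. -/
inductive CC (C : Type) where
  | tt : CC C
  | atom : C → Cmp → ℕ → CC C
  | and : CC C → CC C → CC C

/-- Satisfaction of a clock constraint by a clock valuation. -/
def CC.sat {C : Type} (v : C → ℝ) : CC C → Prop
  | .tt => True
  | .atom c op n => op.sat (v c) n
  | .and g g' => g.sat v ∧ g'.sat v

/-- Renaming of clocks in a clock constraint. -/
def CC.map {C D : Type} (f : C → D) : CC C → CC D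
  | .tt => .tt
  | .atom c op n => .atom (f c) op n
  | .and g g' => .and (g.map f) (g'.map f)

/-- A transition of a TBA. -/
structure TBATrans (α Q C : Type) where
  src : Q
  dst : Q
  sym : α
  reset : Set C
  guard : CC C

/-- A timed Büchi automaton over alphabet `α` with locations `Q` and clocks `C`
(finiteness of `α`, `Q`, `C` and of the transition set is assumed where needed). -/
structure TBA (α Q C : Type) where
  init : Set Q
  trans : Set (TBATrans α Q C)
  final : Set Q

/-- A state of a TBA: a location together with a clock valuation. -/
abbrev TState (Q C : Type) := Q × (C → ℝ)

/-- `A.step s d a s'`: from state `s`, delaying `d` and reading `a`, the automaton can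
move to state `s'` via some transition whose guard is satisfied by `s.2 + d`,
resetting the clocks in the reset set. -/
def TBA.step {α Q C : Type} (A : TBA α Q C) (s : TState Q C) (d : ℝ) (a : α)
    (s' : TState Q C) : Prop :=
  ∃ t ∈ A.trans, t.src = s.1 ∧ t.dst = s'.1 ∧ t.sym = a ∧
    t.guard.sat (fun c => s.2 c + d) ∧
    (∀ c ∈ t.reset, s'.2 c = 0) ∧ (∀ c ∉ t.reset, s'.2 c = s.2 c + d)

/-- `prevT τ i` is τ_{i-1} with the convention τ₀ = 0 (0-indexed: position `i` of the
word has predecessor timestamp `prevT τ i`). -/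
def prevT (τ : ℕ → ℝ) (i : ℕ) : ℝ := if i = 0 then 0 else τ (i - 1)

/-- `r` is a run of `A` on the infinite timed word `ρ` (from the state `r 0`). -/
def TBA.InfRun {α Q C : Type} (A : TBA α Q C) (ρ : InfTW α) (r : ℕ → TState Q C) : Prop :=
  ∀ i, A.step (r i) (ρ.2 i - prevT ρ.2 i) (ρ.1 i) (r (i + 1))

/-- `r` is an accepting run of `A` on `ρ`: some accepting location occurs infinitely often. -/
def TBA.AccRun {α Q C : Type} (A : TBA α Q C) (ρ : InfTW α) (r : ℕ → TState Q C) : Prop :=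
  A.InfRun ρ r ∧ ∃ q ∈ A.final, ∀ n, ∃ m, n ≤ m ∧ (r m).1 = q

/-- The language of `A` from a state `s`. -/
def TBA.Lang {α Q C : Type} (A : TBA α Q C) (s : TState Q C) : Set (InfTW α) :=
  {ρ | IsInfTW ρ ∧ ∃ r, r 0 = s ∧ A.AccRun ρ r}

/-- The language of `A` (from its initial locations, with all clocks 0). -/
def TBA.LangInit {α Q C : Type} (A : TBA α Q C) : Set (InfTW α) :=
  {ρ | ∃ q ∈ A.init, ρ ∈ A.Lang (q, fun _ => 0)}

/-- `r` is a run of `A` over the finite timed word `ρ` (from the state `r 0`),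
consisting of steps `r 0, …, r (ρ.len + 1)`. -/
def TBA.FinRun {α Q C : Type} (A : TBA α Q C) (ρ : FinTW α) (r : ℕ → TState Q C) : Prop :=
  ∀ i ≤ ρ.len, A.step (r i) (ρ.time i - prevT ρ.time i) (ρ.sym i) (r (i + 1))

/-- The state estimate `Terminal(A, ρ)`: all states reachable by a run of `A` over `ρ`
from some initial state (initial location, all clocks 0). -/
def TBA.Terminal {α Q C : Type} (A : TBA α Q C) (ρ : FinTW α) : Set (TState Q C) :=
  {s | ∃ r : ℕ → TState Q C, (r 0).1 ∈ A.init ∧ (∀ c, (r 0).2 c = 0) ∧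
        A.FinRun ρ r ∧ r (ρ.len + 1) = s}

/-- `NonEmpty(A)`: the states of `A` with a non-empty language. -/
def TBA.NonEmptySt {α Q C : Type} (A : TBA α Q C) : Set (TState Q C) :=
  {s | (A.Lang s).Nonempty}

/-! ## Statement 1 -/

/-- The automaton `A_D`: locations `A = true` (initial, accepting) and `B = false`,
single clock `z : Unit`; for every symbol: `A → B` resetting `z`, `B → B` with `z < 1`,
and `B → A` with `z ≥ 1`. -/
def AD (α : Type) : TBA α Bool Unit where
  init := {true}
  final := {true}
  trans := {t | (t.src = true ∧ t.dst = false ∧ t.reset = Set.univ ∧ t.guard = .tt) ∨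
                (t.src = false ∧ t.dst = false ∧ t.reset = ∅ ∧ t.guard = .atom () .lt 1) ∨
                (t.src = false ∧ t.dst = true ∧ t.reset = ∅ ∧ t.guard = .atom () .ge 1)}

lemma prevT_succ (τ : ℕ → ℝ) (i : ℕ) : prevT τ (i + 1) = τ i := by simp [prevT]

lemma AD_step_true {α : Type} {s s' : TState Bool Unit} {d : ℝ} {a : α}
    (hs : s.1 = true) (h : (AD α).step s d a s') : s'.1 = false ∧ ∀ c, s'.2 c = 0 := by
  obtain ⟨t, ht, hsrc, hdst, -, hg, hres, hnres⟩ := h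
  rcases ht with ⟨-, h2, h3, -⟩ | ⟨h1, -⟩ | ⟨h1, -⟩
  · exact ⟨hdst ▸ h2, fun c => hres c (by simp [h3])⟩
  · rw [hs] at hsrc; rw [h1] at hsrc; simp at hsrc
  · rw [hs] at hsrc; rw [h1] at hsrc; simp at hsrc

lemma AD_step_false {α : Type} {s s' : TState Bool Unit} {d : ℝ} {a : α}
    (hs : s.1 = false) (h : (AD α).step s d a s') :
    (∀ c, s'.2 c = s.2 c + d) ∧ (s'.1 = true → 1 ≤ s.2 () + d) := by
  obtain ⟨t, ht, hsrc, hdst, -, hg, hres, hnres⟩ := h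
  rcases ht with ⟨h1, -⟩ | ⟨-, h2, h3, h4⟩ | ⟨-, h2, h3, h4⟩
  · rw [hs] at hsrc; rw [h1] at hsrc; simp at hsrc
  · refine ⟨fun c => hnres c (by simp [h3]), fun ht' => ?_⟩
    rw [h2] at hdst; rw [ht'] at hdst; simp at hdst
  · refine ⟨fun c => hnres c (by simp [h3]), fun _ => ?_⟩
    rw [h4] at hg
    simpa [CC.sat, Cmp.sat] using hg

lemma AD_forward {α : Type} {ρ : InfTW α} (hρ : IsInfTW ρ) {r : ℕ → TState Bool Unit}
    (hrun : (AD α).InfRun ρ r) (h0 : (r 0).1 = true)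
    (hacc : ∀ n, ∃ m, n ≤ m ∧ (r m).1 = true) :
    Tendsto ρ.2 atTop atTop := by
  classical
  set τ := ρ.2 with hτ
  have hprev : ∀ i, prevT τ (i + 1) = τ i := prevT_succ τ
  have hple : ∀ m, prevT τ m ≤ τ m := by
    intro m
    cases m with
    | zero => simpa [prevT] using hρ.1.le
    | succ n => rw [hprev]; exact (hρ.2 (Nat.lt_succ_self n)).le
  have gap : ∀ m, (r m).1 = true → ∃ m', m < m' ∧ (r m').1 = true ∧ τ m + 1 ≤ τ m' := by
    intro m hm
    obtain ⟨k, hk, hkt⟩ := hacc (m + 1)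
    have hex : ∃ j, m < j ∧ (r j).1 = true := ⟨k, by omega, hkt⟩
    obtain ⟨m', hmlt, hmt, hmin⟩ :
        ∃ m', m < m' ∧ (r m').1 = true ∧ ∀ j < m', ¬(m < j ∧ (r j).1 = true) :=
      ⟨Nat.find hex, (Nat.find_spec hex).1, (Nat.find_spec hex).2,
        fun j hj => Nat.find_min hex hj⟩
    have hfalse : ∀ j, m < j → j < m' → (r j).1 = false := by
      intro j h1 h2
      cases hb : (r j).1 with
      | false => rfl
      | true => exact absurd ⟨h1, hb⟩ (hmin j h2)
    have hstep0 := AD_step_true hm (hrun m)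
    have hm1 : m + 1 < m' := by
      rcases Nat.lt_or_ge (m + 1) m' with h | h
      · exact h
      · have : m' = m + 1 := by omega
        rw [this] at hmt; rw [hstep0.1] at hmt; simp at hmt
    have seg : ∀ j, m + 1 ≤ j → j ≤ m' → (r j).2 () = prevT τ j - τ m := by
      intro j hj1
      induction j, hj1 using Nat.le_induction with
      | base => intro _; rw [hstep0.2 (), hprev]; ring
      | succ j hj ih =>
        intro hjm
        have hjf : (r j).1 = false := hfalse j (by omega) (by omega)
        have hsf := (AD_step_false hjf (hrun j)).1 ()
        rw [hsf, ih (by omega), hprev]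
        ring
    obtain ⟨m'', rfl⟩ : ∃ k, m' = k + 1 := ⟨m' - 1, by omega⟩
    have hm''f : (r m'').1 = false := hfalse m'' (by omega) (by omega)
    have hge := (AD_step_false hm''f (hrun m'')).2 hmt
    rw [seg m'' (by omega) (by omega)] at hge
    have := hple m''
    have hmono : τ m'' ≤ τ (m'' + 1) := (hρ.2 (Nat.lt_succ_self m'')).le
    exact ⟨m'' + 1, by omega, hmt, by linarith⟩
  have claim : ∀ n : ℕ, ∃ m, (r m).1 = true ∧ (n : ℝ) ≤ τ m := by
    intro n
    induction n with
    | zero => exact ⟨0, h0, by simpa using hρ.1.le⟩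
    | succ k ih =>
      obtain ⟨m, hm, hτm⟩ := ih
      obtain ⟨m', _, h2, h3⟩ := gap m hm
      exact ⟨m', h2, by push_cast; linarith⟩
  refine tendsto_atTop_atTop_of_monotone hρ.2.monotone fun b => ?_
  obtain ⟨m, -, hm⟩ := claim ⌈b⌉₊
  exact ⟨m, (Nat.le_ceil b).trans hm⟩

/-- The canonical run of `A_D` on timestamps `τ` (location, clock value). -/
noncomputable def runAD (τ : ℕ → ℝ) : ℕ → Bool × ℝ := fun n =>
  Nat.rec (true, (0 : ℝ))
    (fun i p => by classical exact
      if p.1 then (false, 0)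
      else if p.2 + (τ i - prevT τ i) < 1
        then (false, p.2 + (τ i - prevT τ i))
        else (true, p.2 + (τ i - prevT τ i))) n

lemma runAD_zero (τ : ℕ → ℝ) : runAD τ 0 = (true, 0) := rfl

lemma runAD_succ (τ : ℕ → ℝ) (i : ℕ) :
    runAD τ (i + 1) =
      if (runAD τ i).1 then (false, 0)
      else if (runAD τ i).2 + (τ i - prevT τ i) < 1
        then (false, (runAD τ i).2 + (τ i - prevT τ i))
        else (true, (runAD τ i).2 + (τ i - prevT τ i)) := by
  simp only [runAD]
  congr 1

lemma AD_backward {α : Type} {ρ : InfTW α} (hρ : IsDivergent ρ) :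
    ρ ∈ (AD α).LangInit := by
  obtain ⟨hIT, hdiv⟩ := hρ
  set τ := ρ.2 with hτ
  have hprev : ∀ i, prevT τ (i + 1) = τ i := prevT_succ τ
  set r : ℕ → TState Bool Unit := fun i => ((runAD τ i).1, fun _ => (runAD τ i).2) with hr
  have hrun : (AD α).InfRun ρ r := by
    intro i
    cases hb : (runAD τ i).1 with
    | true =>
      have hnext : runAD τ (i + 1) = (false, 0) := by rw [runAD_succ, hb]; simp
      refine ⟨⟨true, false, ρ.1 i, Set.univ, .tt⟩, Or.inl ⟨rfl, rfl, rfl, rfl⟩,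
        hb.symm, ?_, rfl, trivial, ?_, ?_⟩
      · simp [hr, hnext]
      · intro c _; simp [hr, hnext]
      · intro c hc; exact absurd (Set.mem_univ c) hc
    | false =>
      by_cases hx : (runAD τ i).2 + (τ i - prevT τ i) < 1
      · have hnext : runAD τ (i + 1) = (false, (runAD τ i).2 + (τ i - prevT τ i)) := by
          rw [runAD_succ, hb]; simp [hx]
        refine ⟨⟨false, false, ρ.1 i, ∅, .atom () .lt 1⟩, Or.inr (Or.inl ⟨rfl, rfl, rfl, rfl⟩),
          hb.symm, ?_, rfl, ?_, ?_, ?_⟩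
        · simp [hr, hnext]
        · simpa [CC.sat, Cmp.sat, hr] using hx
        · intro c hc; exact absurd hc (Set.notMem_empty c)
        · intro c _; simp [hr, hnext]; rfl
      · have hnext : runAD τ (i + 1) = (true, (runAD τ i).2 + (τ i - prevT τ i)) := by
          rw [runAD_succ, hb]; simp [hx]
        refine ⟨⟨false, true, ρ.1 i, ∅, .atom () .ge 1⟩, Or.inr (Or.inr ⟨rfl, rfl, rfl, rfl⟩),
          hb.symm, ?_, rfl, ?_, ?_, ?_⟩
        · simp [hr, hnext]
        · simp only [CC.sat, Cmp.sat, Nat.cast_one]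
          push_neg at hx
          simpa [hr] using hx
        · intro c hc; exact absurd hc (Set.notMem_empty c)
        · intro c _; simp [hr, hnext]; rfl
  have hacc : ∀ n, ∃ m, n ≤ m ∧ (r m).1 = true := by
    by_contra h
    push_neg at h
    obtain ⟨n, hn⟩ := h
    have hfalse : ∀ m, n ≤ m → (runAD τ m).1 = false := by
      intro m hm
      cases hb : (runAD τ m).1 with
      | false => rfl
      | true => exact absurd (show (r m).1 = true from hb) (hn m hm)
    have key : ∀ i, n ≤ i →
        (runAD τ (i + 1)).2 = (runAD τ n).2 + (τ i - prevT τ n) ∧ (runAD τ (i + 1)).2 < 1 := by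
      intro i hi
      induction i, hi using Nat.le_induction with
      | base =>
        have hb := hfalse n le_rfl
        have hb1 := hfalse (n + 1) (by omega)
        by_cases hx : (runAD τ n).2 + (τ n - prevT τ n) < 1
        · have : runAD τ (n + 1) = (false, (runAD τ n).2 + (τ n - prevT τ n)) := by
            rw [runAD_succ, hb]; simp [hx]
          rw [this]; exact ⟨rfl, hx⟩
        · have : runAD τ (n + 1) = (true, (runAD τ n).2 + (τ n - prevT τ n)) := by
            rw [runAD_succ, hb]; simp [hx]
          rw [this] at hb1; simp at hb1
      | succ i hi ih =>
        have hb := hfalse (i + 1) (by omega)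
        have hb2 := hfalse (i + 2) (by omega)
        by_cases hx : (runAD τ (i + 1)).2 + (τ (i + 1) - prevT τ (i + 1)) < 1
        · have heq : runAD τ (i + 2) = (false, (runAD τ (i + 1)).2 + (τ (i + 1) - prevT τ (i + 1))) := by
            rw [show i + 2 = (i + 1) + 1 from rfl, runAD_succ, hb]; simp [hx]
          constructor
          · rw [heq]
            show (runAD τ (i + 1)).2 + (τ (i + 1) - prevT τ (i + 1)) = _
            rw [ih.1, hprev]
            ring
          · rw [heq]; exact hx
        · have heq : runAD τ (i + 2) = (true, (runAD τ (i + 1)).2 + (τ (i + 1) - prevT τ (i + 1))) := by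
            rw [show i + 2 = (i + 1) + 1 from rfl, runAD_succ, hb]; simp [hx]
          rw [heq] at hb2; simp at hb2
    obtain ⟨i, hiC, hin⟩ :=
      ((hdiv.eventually_ge_atTop (1 - (runAD τ n).2 + prevT τ n)).and
        (eventually_ge_atTop n)).exists
    obtain ⟨h1, h2⟩ := key i hin
    rw [h1] at h2
    have : τ i < 1 - (runAD τ n).2 + prevT τ n := by linarith
    exact absurd hiC (by rw [hτ] at this ⊢; linarith)
  refine ⟨true, rfl, hIT, r, ?_, hrun, true, rfl, hacc⟩
  have : runAD τ 0 = (true, 0) := runAD_zero τ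
  simp [hr, this]

theorem stmt1 (α : Type) [Finite α] [Nonempty α] :
    (AD α).LangInit = {μ : InfTW α | IsDivergent μ} := by
  ext ρ
  constructor
  · rintro ⟨q, hq, hIT, r, hr0, hrun, q', hq', hinf⟩
    have hqt : q = true := hq
    have hq't : q' = true := hq'
    refine ⟨hIT, AD_forward hIT hrun ?_ ?_⟩
    · rw [hr0, hqt]
    · intro n; obtain ⟨m, hm1, hm2⟩ := hinf n; exact ⟨m, hm1, hq't ▸ hm2⟩
  · exact fun h => AD_backward h
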